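/- Let (aₙ) and (bₙ) be real sequences with aₙ → 0, bₙ → 0, bₙ ≠ 0 for all n, bₙ ≠ bₙ₊₁ for all n, aₙ/bₙ → L, and bₙ/bₙ₊₁ → c where c ≠ 1 is a real number (or bₙ/bₙ₊₁ → ∞). Then (aₙ − aₙ₊₁)/(bₙ − bₙ₊₁) → L. -/

import Mathlib

open Filter

theorem stmt_2 (a b : ℕ → ℝ) (L : ℝ)
    (ha : Tendsto a atTop (nhds 0)) (hb : Tendsto b atTop (nhds 0))
    (hbne : ∀ n, b n ≠ 0) (hbne' : ∀ n, b n ≠ b (n + 1))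
    (hab : Tendsto (fun n => a n / b n) atTop (nhds L))
    (hratio : (∃ c : ℝ, c ≠ 1 ∧ Tendsto (fun n => b n / b (n + 1)) atTop (nhds c)) ∨
      Tendsto (fun n => b n / b (n + 1)) atTop atTop) :
    Tendsto (fun n => (a n - a (n + 1)) / (b n - b (n + 1))) atTop (nhds L) := by
  have hbsub : ∀ n, b n - b (n + 1) ≠ 0 := fun n => sub_ne_zero.mpr (hbne' n)
  have hr1 : ∀ n, b n / b (n + 1) - 1 ≠ 0 := by
    intro n
    rw [sub_ne_zero]
    intro h
    exact hbne' n ((div_eq_one_iff_eq (hbne (n + 1))).mp h)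
  have key : ∀ n, (a n - a (n + 1)) / (b n - b (n + 1)) =
      a n / b n + (a n / b n - a (n + 1) / b (n + 1)) / (b n / b (n + 1) - 1) := by
    intro n
    have h1 := hbne n
    have h2 := hbne (n + 1)
    have h3 := hbsub n
    have h4 := hr1 n
    field_simp
    ring
  have hnum : Tendsto (fun n => a n / b n - a (n + 1) / b (n + 1)) atTop (nhds 0) := by
    have := hab.sub (hab.comp (tendsto_add_atTop_nat 1))
    simpa using this
  have hzero : Tendsto (fun n => (a n / b n - a (n + 1) / b (n + 1)) / (b n / b (n + 1) - 1))
      atTop (nhds 0) := by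
    rcases hratio with ⟨c, hc, hcs⟩ | htop
    · have hden : Tendsto (fun n => b n / b (n + 1) - 1) atTop (nhds (c - 1)) :=
        hcs.sub tendsto_const_nhds
      have := hnum.div hden (sub_ne_zero.mpr hc)
      rw [zero_div] at this; exact this
    · have hden : Tendsto (fun n => b n / b (n + 1) - 1) atTop atTop := by
        have := tendsto_atTop_add_const_right atTop (-1 : ℝ) htop
        simpa [sub_eq_add_neg] using this
      have hinv : Tendsto (fun n => (b n / b (n + 1) - 1)⁻¹) atTop (nhds 0) :=
        hden.inv_tendsto_atTop
      have := hnum.mul hinv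
      simpa [div_eq_mul_inv] using this
  have : Tendsto (fun n => a n / b n +
      (a n / b n - a (n + 1) / b (n + 1)) / (b n / b (n + 1) - 1)) atTop (nhds L) := by
    simpa using hab.add hzero
  exact this.congr fun n => (key n).symm
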